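/- On the elliptic curve W_R over ℚ(t) given by y² = x³ + (1−2t)x² + t²x, the point P = (t, t) is a ℚ(t)-rational point satisfying 2P = (0,0), and P has order exactly 4 in the group of ℚ(t)-rational points. (This is the 4-torsion section generating the Mordell–Weil group ℤ/4ℤ of the rational elliptic surface R.) -/

import Mathlib

/-- `W_R`: the Weierstrass curve `y² = x³ + (1 - 2t)x² + t²x` over `ℚ(t)`,
a Weierstrass model of the extremal rational elliptic surface `R`. -/
noncomputable def WR : WeierstrassCurve (RatFunc ℚ) :=
  ⟨0, 1 - 2 * RatFunc.X, 0, RatFunc.X ^ 2, 0⟩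

private lemma some_congr {F : Type*} [Field F] {W : WeierstrassCurve.Affine F}
    {x₁ y₁ x₂ y₂ : F} (h₁ : W.Nonsingular x₁ y₁) (h₂ : W.Nonsingular x₂ y₂)
    (hx : x₁ = x₂) (hy : y₁ = y₂) :
    WeierstrassCurve.Affine.Point.some _ _ h₁ = WeierstrassCurve.Affine.Point.some _ _ h₂ := by
  subst hx; subst hy; rfl

private lemma tX_ne : (RatFunc.X : RatFunc ℚ) ≠ 0 := RatFunc.X_ne_zero

private lemma two_ne : (2 : RatFunc ℚ) ≠ 0 := by
  rw [show (2 : RatFunc ℚ) = algebraMap (Polynomial ℚ) (RatFunc ℚ) 2 from (map_ofNat _ 2).symm]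
  exact RatFunc.algebraMap_ne_zero (by norm_num)

private lemma hP : WR.toAffine.Nonsingular RatFunc.X RatFunc.X := by
  rw [WeierstrassCurve.Affine.nonsingular_iff]
  refine ⟨?_, Or.inr ?_⟩
  · rw [WeierstrassCurve.Affine.equation_iff]
    show (RatFunc.X : RatFunc ℚ) ^ 2 + 0 * _ * _ + 0 * _ =
      _ ^ 3 + (1 - 2 * RatFunc.X) * _ ^ 2 + RatFunc.X ^ 2 * _ + 0
    ring
  · show (RatFunc.X : RatFunc ℚ) ≠ -RatFunc.X - 0 * RatFunc.X - 0
    intro h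
    apply tX_ne
    have : (2 : RatFunc ℚ) * RatFunc.X = 0 := by linear_combination h
    have h2 := two_ne
    exact (mul_eq_zero.mp this).resolve_left h2

private lemma hO : WR.toAffine.Nonsingular 0 0 := by
  rw [WeierstrassCurve.Affine.nonsingular_zero]
  exact ⟨rfl, Or.inr (pow_ne_zero 2 tX_ne)⟩

private lemma hPne : (RatFunc.X : RatFunc ℚ) ≠ WR.toAffine.negY RatFunc.X RatFunc.X := by
  show (RatFunc.X : RatFunc ℚ) ≠ -RatFunc.X - 0 * RatFunc.X - 0
  intro h
  apply tX_ne
  have : (2 : RatFunc ℚ) * RatFunc.X = 0 := by linear_combination h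
  exact (mul_eq_zero.mp this).resolve_left two_ne

open Classical in
private lemma slope_eq :
    WR.toAffine.slope RatFunc.X RatFunc.X RatFunc.X RatFunc.X = 1 := by
  rw [WeierstrassCurve.Affine.slope_of_Y_ne rfl hPne]
  show (3 * RatFunc.X ^ 2 + 2 * (1 - 2 * RatFunc.X) * RatFunc.X + RatFunc.X ^ 2 - 0 * RatFunc.X)
      / (RatFunc.X - (-RatFunc.X - 0 * RatFunc.X - 0)) = (1 : RatFunc ℚ)
  rw [div_eq_one_iff_eq]
  · ring
  · intro h
    apply tX_ne
    have : (2 : RatFunc ℚ) * RatFunc.X = 0 := by linear_combination h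
    exact (mul_eq_zero.mp this).resolve_left two_ne

open Classical in
private lemma two_smul_P :
    2 • (WeierstrassCurve.Affine.Point.some _ _ hP) = WeierstrassCurve.Affine.Point.some _ _ hO := by
  rw [two_smul]
  rw [WeierstrassCurve.Affine.Point.add_self_of_Y_ne hPne]
  apply some_congr
  · show WR.toAffine.addX RatFunc.X RatFunc.X
      (WR.toAffine.slope RatFunc.X RatFunc.X RatFunc.X RatFunc.X) = 0
    rw [slope_eq]
    show (1 : RatFunc ℚ) ^ 2 + 0 * 1 - (1 - 2 * RatFunc.X) - RatFunc.X - RatFunc.X = 0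
    ring
  · show WR.toAffine.addY RatFunc.X RatFunc.X RatFunc.X
      (WR.toAffine.slope RatFunc.X RatFunc.X RatFunc.X RatFunc.X) = 0
    rw [slope_eq]
    simp [WeierstrassCurve.Affine.addY, WeierstrassCurve.Affine.negY,
      WeierstrassCurve.Affine.negAddY, WeierstrassCurve.Affine.addX, WR]
    ring

open Classical in
private lemma O_ne_zero :
    (WeierstrassCurve.Affine.Point.some _ _ hO : WR.toAffine.Point) ≠ 0 := by
  intro h
  exact (WeierstrassCurve.Affine.Point.some_ne_zero hO) h

open Classical in
private lemma two_smul_O :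
    2 • (WeierstrassCurve.Affine.Point.some _ _ hO : WR.toAffine.Point) = 0 := by
  rw [two_smul]
  exact WeierstrassCurve.Affine.Point.add_self_of_Y_eq (by show (0:RatFunc ℚ) = -0 - 0*0 - 0; ring)

open Classical in
/-- On the elliptic curve `W_R : y² = x³ + (1 - 2t)x² + t²x` over `ℚ(t)`, the point
`P = (t, t)` is a rational point satisfying `2P = (0, 0)`, and `P` has order exactly `4`
in the group of `ℚ(t)`-rational points. -/
theorem stmt6 :
    ∃ (h : WR.toAffine.Nonsingular RatFunc.X RatFunc.X)
      (h0 : WR.toAffine.Nonsingular 0 0),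
      2 • (WeierstrassCurve.Affine.Point.some _ _ h) = WeierstrassCurve.Affine.Point.some _ _ h0 ∧
      addOrderOf (WeierstrassCurve.Affine.Point.some _ _ h) = 4 := by
  refine ⟨hP, hO, two_smul_P, ?_⟩
  have h4 : (2 : ℕ) ^ 2 • (WeierstrassCurve.Affine.Point.some _ _ hP : WR.toAffine.Point) = 0 := by
    have : (2 : ℕ) ^ 2 = 2 * 2 := by norm_num
    rw [this, mul_smul, two_smul_P, two_smul_O]
  have h2 : ¬ (2 : ℕ) ^ 1 • (WeierstrassCurve.Affine.Point.some _ _ hP : WR.toAffine.Point) = 0 := by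
    rw [pow_one, two_smul_P]
    exact O_ne_zero
  have := addOrderOf_eq_prime_pow (p := 2) (n := 1) h2 h4
  simpa using this
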